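/- Let V₁, V₂, V₃ be finite nonempty sets, f₁₂ : V₁ × V₂ → ℝ and f₂₃ : V₂ × V₃ → ℝ with f₂₃ taking nonnegative values, and suppose E_{x₃∈V₃} f₂₃(x₂, x₃) ≤ M for every x₂ ∈ V₂. Define (f₁₂ ∘ f₂₃)(x₁,x₃) = E_{x₂∈V₂} f₁₂(x₁,x₂) f₂₃(x₂,x₃). Then ‖f₁₂ ∘ f₂₃‖_□ ≤ M ‖f₁₂‖_□. -/

import Mathlib

open Finset

/-- The cut norm of `f : V × W → ℝ` (with respect to uniform measures):
the supremum over `[0,1]`-valued functions `a`, `b` of `|E[f(x,y)a(x)b(y)]|`. -/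
noncomputable def cutNorm {V W : Type*} [Fintype V] [Fintype W] (f : V → W → ℝ) : ℝ :=
  ⨆ p : {a : V → ℝ // ∀ x, a x ∈ Set.Icc (0 : ℝ) 1} ×
      {b : W → ℝ // ∀ y, b y ∈ Set.Icc (0 : ℝ) 1},
    |(∑ x, ∑ y, f x y * p.1.1 x * p.2.1 y) / ((Fintype.card V : ℝ) * (Fintype.card W : ℝ))|

lemma cutNorm_bddAbove {V W : Type*} [Fintype V] [Fintype W] (f : V → W → ℝ) :
    BddAbove (Set.range fun p : {a : V → ℝ // ∀ x, a x ∈ Set.Icc (0 : ℝ) 1} ×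
        {b : W → ℝ // ∀ y, b y ∈ Set.Icc (0 : ℝ) 1} =>
      |(∑ x, ∑ y, f x y * p.1.1 x * p.2.1 y) /
        ((Fintype.card V : ℝ) * (Fintype.card W : ℝ))|) := by
  refine ⟨(∑ x, ∑ y, |f x y|) / ((Fintype.card V : ℝ) * (Fintype.card W : ℝ)), ?_⟩
  rintro _ ⟨p, rfl⟩
  simp only
  rw [abs_div, abs_of_nonneg (by positivity : (0:ℝ) ≤ (Fintype.card V : ℝ) * (Fintype.card W : ℝ))]
  gcongr
  calc |∑ x, ∑ y, f x y * p.1.1 x * p.2.1 y|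
      ≤ ∑ x, |∑ y, f x y * p.1.1 x * p.2.1 y| := Finset.abs_sum_le_sum_abs _ _
    _ ≤ ∑ x, ∑ y, |f x y * p.1.1 x * p.2.1 y| := by
        gcongr with x _; exact Finset.abs_sum_le_sum_abs _ _
    _ ≤ ∑ x, ∑ y, |f x y| := by
        refine Finset.sum_le_sum fun x _ => Finset.sum_le_sum fun y _ => ?_
        rw [abs_mul, abs_mul]
        have h1 := p.1.2 x
        have h2 := p.2.2 y
        have ha1 : |p.1.1 x| ≤ 1 := abs_le.2 ⟨by linarith [h1.1], h1.2⟩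
        have hb1 : |p.2.1 y| ≤ 1 := abs_le.2 ⟨by linarith [h2.1], h2.2⟩
        calc |f x y| * |p.1.1 x| * |p.2.1 y| ≤ (|f x y| * 1) * 1 :=
              mul_le_mul (mul_le_mul_of_nonneg_left ha1 (abs_nonneg _)) hb1
                (abs_nonneg _) (by positivity)
          _ = |f x y| := by ring

lemma cutNorm_nonneg {V W : Type*} [Fintype V] [Fintype W] (f : V → W → ℝ) :
    0 ≤ cutNorm f :=
  Real.iSup_nonneg fun _ => abs_nonneg _

theorem cutNorm_compose_le {V₁ V₂ V₃ : Type*} [Fintype V₁] [Fintype V₂] [Fintype V₃]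
    [Nonempty V₁] [Nonempty V₂] [Nonempty V₃]
    (f₁₂ : V₁ → V₂ → ℝ) (f₂₃ : V₂ → V₃ → ℝ) (M : ℝ)
    (h0 : ∀ x₂ x₃, 0 ≤ f₂₃ x₂ x₃)
    (hM : ∀ x₂, (∑ x₃, f₂₃ x₂ x₃) / (Fintype.card V₃ : ℝ) ≤ M) :
    cutNorm (fun x₁ x₃ => (∑ x₂, f₁₂ x₁ x₂ * f₂₃ x₂ x₃) / (Fintype.card V₂ : ℝ)) ≤
      M * cutNorm f₁₂ := by
  have hc₂ : (0:ℝ) < (Fintype.card V₂ : ℝ) := by positivity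
  have hc₃ : (0:ℝ) < (Fintype.card V₃ : ℝ) := by positivity
  have hM0 : 0 ≤ M :=
    le_trans (div_nonneg (Finset.sum_nonneg fun x₃ _ => h0 _ x₃) hc₃.le)
      (hM (Classical.arbitrary V₂))
  have hRHS0 : 0 ≤ M * cutNorm f₁₂ := mul_nonneg hM0 (cutNorm_nonneg f₁₂)
  refine Real.iSup_le (fun p => ?_) hRHS0
  obtain ⟨⟨a, ha⟩, ⟨c, hc⟩⟩ := p
  simp only
  rcases eq_or_lt_of_le hM0 with hMeq | hMpos
  · -- M = 0 forces f₂₃ = 0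
    have hzero : ∀ x₂ x₃, f₂₃ x₂ x₃ = 0 := by
      intro x₂ x₃
      have h := hM x₂
      rw [← hMeq] at h
      have h1 : (∑ x₃, f₂₃ x₂ x₃) ≤ 0 := by
        have := mul_le_mul_of_nonneg_right h hc₃.le
        rwa [div_mul_cancel₀ _ hc₃.ne', zero_mul] at this
      have hsum : (∑ x₃, f₂₃ x₂ x₃) = 0 :=
        le_antisymm h1 (Finset.sum_nonneg fun x₃ _ => h0 _ x₃)
      exact (Finset.sum_eq_zero_iff_of_nonneg fun x₃ _ => h0 x₂ x₃).mp hsum x₃ (mem_univ _)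
    simp only [hzero, mul_zero, Finset.sum_const_zero, zero_div, zero_mul, abs_zero]
    exact hRHS0
  · -- M > 0 : build the test function b on V₂
    set B : V₂ → ℝ := fun x₂ => (∑ x₃, f₂₃ x₂ x₃ * c x₃) / (Fintype.card V₃ : ℝ) with hB
    have hB01 : ∀ x₂, B x₂ / M ∈ Set.Icc (0:ℝ) 1 := by
      intro x₂
      constructor
      · apply div_nonneg _ hM0
        exact div_nonneg (Finset.sum_nonneg fun x₃ _ =>
          mul_nonneg (h0 _ _) (hc x₃).1) hc₃.le
      · rw [div_le_one hMpos]
        refine le_trans ?_ (hM x₂)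
        simp only [hB]
        gcongr with x₃ _
        · nlinarith [h0 x₂ x₃, (hc x₃).1, (hc x₃).2]
    have hc₁ : (0:ℝ) < (Fintype.card V₁ : ℝ) := by positivity
    have key : (∑ x₁, ∑ x₃, (∑ x₂, f₁₂ x₁ x₂ * f₂₃ x₂ x₃) / (Fintype.card V₂ : ℝ)
          * a x₁ * c x₃) / ((Fintype.card V₁ : ℝ) * (Fintype.card V₃ : ℝ))
        = M * ((∑ x₁, ∑ x₂, f₁₂ x₁ x₂ * a x₁ * (B x₂ / M))
            / ((Fintype.card V₁ : ℝ) * (Fintype.card V₂ : ℝ))) := by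
      have e1 : (∑ x₁, ∑ x₃, (∑ x₂, f₁₂ x₁ x₂ * f₂₃ x₂ x₃) / (Fintype.card V₂ : ℝ)
            * a x₁ * c x₃)
          = (∑ x₁, ∑ x₂, f₁₂ x₁ x₂ * a x₁ * B x₂)
            * ((Fintype.card V₃ : ℝ) / (Fintype.card V₂ : ℝ)) := by
        rw [Finset.sum_mul]
        refine Finset.sum_congr rfl fun x₁ _ => ?_
        rw [Finset.sum_mul]
        calc ∑ x₃, (∑ x₂, f₁₂ x₁ x₂ * f₂₃ x₂ x₃) / (Fintype.card V₂ : ℝ) * a x₁ * c x₃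
            = ∑ x₃, ∑ x₂, f₁₂ x₁ x₂ * f₂₃ x₂ x₃ / (Fintype.card V₂ : ℝ) * a x₁ * c x₃ := by
              refine Finset.sum_congr rfl fun x₃ _ => ?_
              rw [Finset.sum_div, Finset.sum_mul, Finset.sum_mul]
          _ = ∑ x₂, ∑ x₃, f₁₂ x₁ x₂ * f₂₃ x₂ x₃ / (Fintype.card V₂ : ℝ) * a x₁ * c x₃ :=
              Finset.sum_comm
          _ = ∑ x₂, f₁₂ x₁ x₂ * a x₁ * B x₂
                * ((Fintype.card V₃ : ℝ) / (Fintype.card V₂ : ℝ)) := by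
              refine Finset.sum_congr rfl fun x₂ _ => ?_
              simp only [hB]
              have e : ∀ x₃, f₁₂ x₁ x₂ * f₂₃ x₂ x₃ / (Fintype.card V₂ : ℝ) * a x₁ * c x₃
                  = (f₁₂ x₁ x₂ * a x₁ / (Fintype.card V₂ : ℝ)) * (f₂₃ x₂ x₃ * c x₃) :=
                fun x₃ => by ring
              simp only [e]
              rw [← Finset.mul_sum]
              field_simp
      have e2 : (∑ x₁, ∑ x₂, f₁₂ x₁ x₂ * a x₁ * (B x₂ / M))
          = (∑ x₁, ∑ x₂, f₁₂ x₁ x₂ * a x₁ * B x₂) / M := by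
        simp only [Finset.sum_div, mul_div_assoc]
      rw [e1, e2]
      field_simp
    rw [key, abs_mul, abs_of_nonneg hM0]
    have hle : |(∑ x₁, ∑ x₂, f₁₂ x₁ x₂ * a x₁ * (B x₂ / M))
          / ((Fintype.card V₁ : ℝ) * (Fintype.card V₂ : ℝ))| ≤ cutNorm f₁₂ :=
      le_ciSup (cutNorm_bddAbove f₁₂) ⟨⟨a, ha⟩, ⟨fun x₂ => B x₂ / M, hB01⟩⟩
    exact mul_le_mul_of_nonneg_left hle hM0
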